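/- The map S : (ℂ²)⁴ → (ℂ²)⁴ given by S(x₁,x₂,y₁,y₂,z₁,z₂,t₁,t₂) = (x₁y₁/(x₁y₁ + z₁ − x₁z₁), t₁x₂y₂/(y₂ + t₁x₂ − x₂), x₁y₁ + z₁ − x₁z₁, y₂, z₁, t₂, (y₂ + t₁x₂ − x₂)/y₂, z₂) is a 4-simplex map, i.e. it satisfies the 4-simplex equation at every point of (ℂ²)^{10} at which all denominators occurring in both composed sides are nonzero. -/

import Mathlib

noncomputable section

namespace Paper4Simplex

variable {X : Type*}

/-- Quadruples over `X`. -/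
abbrev Q (X : Type*) : Type _ := X × X × X × X

/-- 10-tuples over `X`. -/
abbrev P (X : Type*) : Type _ := X × X × X × X × X × X × X × X × X × X

/-- `S` acting on coordinates 1,2,3,4 of a 10-tuple. -/
def app1234 (S : Q X → Q X) : P X → P X := fun p =>
  match p with
  | (a,b,c,d,e,f,g,h,i,j) =>
    match S (a,b,c,d) with
    | (A,B,C,D) => (A,B,C,D,e,f,g,h,i,j)

/-- `S` acting on coordinates 1,5,6,7 of a 10-tuple. -/
def app1567 (S : Q X → Q X) : P X → P X := fun p =>
  match p with
  | (a,b,c,d,e,f,g,h,i,j) =>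
    match S (a,e,f,g) with
    | (A,E,F,G) => (A,b,c,d,E,F,G,h,i,j)

/-- `S` acting on coordinates 2,5,8,9 of a 10-tuple. -/
def app2589 (S : Q X → Q X) : P X → P X := fun p =>
  match p with
  | (a,b,c,d,e,f,g,h,i,j) =>
    match S (b,e,h,i) with
    | (B,E,H,I) => (a,B,c,d,E,f,g,H,I,j)

/-- `S` acting on coordinates 3,6,8,10 of a 10-tuple. -/
def app368X (S : Q X → Q X) : P X → P X := fun p =>
  match p with
  | (a,b,c,d,e,f,g,h,i,j) =>
    match S (c,f,h,j) with
    | (C,F,H,J) => (a,b,C,d,e,F,g,H,i,J)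

/-- `S` acting on coordinates 4,7,9,10 of a 10-tuple. -/
def app479X (S : Q X → Q X) : P X → P X := fun p =>
  match p with
  | (a,b,c,d,e,f,g,h,i,j) =>
    match S (d,g,i,j) with
    | (D,G,I,J) => (a,b,c,D,e,f,G,h,I,J)

def proj1234 : P X → Q X := fun p => match p with
  | (a,b,c,d,_,_,_,_,_,_) => (a,b,c,d)

def proj1567 : P X → Q X := fun p => match p with
  | (a,_,_,_,e,f,g,_,_,_) => (a,e,f,g)

def proj2589 : P X → Q X := fun p => match p with
  | (_,b,_,_,e,_,_,h,i,_) => (b,e,h,i)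

def proj368X : P X → Q X := fun p => match p with
  | (_,_,c,_,_,f,_,h,_,j) => (c,f,h,j)

def proj479X : P X → Q X := fun p => match p with
  | (_,_,_,d,_,_,g,_,i,j) => (d,g,i,j)

/-- Left-hand side of the 4-simplex equation. -/
def lhs (S : Q X → Q X) : P X → P X :=
  app1234 S ∘ app1567 S ∘ app2589 S ∘ app368X S ∘ app479X S

/-- Right-hand side of the 4-simplex equation. -/
def rhs (S : Q X → Q X) : P X → P X :=
  app479X S ∘ app368X S ∘ app2589 S ∘ app1567 S ∘ app1234 S

/-- All denominators occurring on the left-hand side composition are nonzero: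
`D` holds at each quadruple to which `S` is applied. -/
def lhsDom (D : Q X → Prop) (S : Q X → Q X) (p : P X) : Prop :=
  D (proj479X p) ∧
  D (proj368X (app479X S p)) ∧
  D (proj2589 (app368X S (app479X S p))) ∧
  D (proj1567 (app2589 S (app368X S (app479X S p)))) ∧
  D (proj1234 (app1567 S (app2589 S (app368X S (app479X S p)))))

/-- All denominators occurring on the right-hand side composition are nonzero. -/
def rhsDom (D : Q X → Prop) (S : Q X → Q X) (p : P X) : Prop :=
  D (proj1234 p) ∧
  D (proj1567 (app1234 S p)) ∧
  D (proj2589 (app1567 S (app1234 S p))) ∧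
  D (proj368X (app2589 S (app1567 S (app1234 S p)))) ∧
  D (proj479X (app368X S (app2589 S (app1567 S (app1234 S p)))))


/-! Case c of the Kashaev–Korepanov–Sergeev type 4-simplex maps. -/

abbrev C2 : Type := ℂ × ℂ

/-- The 4-simplex map of case c. -/
def Sc : Q C2 → Q C2 := fun q =>
  match q with
  | ((x1,x2),(y1,y2),(z1,z2),(t1,t2)) =>
    ((x1*y1/(x1*y1 + z1 - x1*z1), t1*x2*y2/(y2 + t1*x2 - x2)),
     (x1*y1 + z1 - x1*z1, y2),
     (z1, t2),
     ((y2 + t1*x2 - x2)/y2, z2))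

/-- Nonvanishing of the denominators of `Sc`. -/
def DomC : Q C2 → Prop := fun q =>
  match q with
  | ((x1,x2),(y1,y2),(z1,_),(t1,_)) =>
    x1*y1 + z1 - x1*z1 ≠ 0 ∧ y2 + t1*x2 - x2 ≠ 0 ∧ y2 ≠ 0

set_option maxHeartbeats 4000000 in
lemma aux1 (a1 b1 c1 e1 f1 h1 : ℂ) (nz0 : (((a1 * b1) + c1) - (a1 * c1)) ≠ 0) (nz1 : (((b1 * e1) + h1) - (b1 * h1)) ≠ 0) (nz2 : (((c1 * f1) + h1) - (c1 * h1)) ≠ 0) (nz3 : (((a1 * (((b1 * e1) + h1) - (b1 * h1))) + (((c1 * f1) + h1) - (c1 * h1))) - (a1 * (((c1 * f1) + h1) - (c1 * h1)))) ≠ 0) (nz4 : (((((a1 * b1) / (((a1 * b1) + c1) - (a1 * c1))) * e1) + f1) - (((a1 * b1) / (((a1 * b1) + c1) - (a1 * c1))) * f1)) ≠ 0) (nz5 : (((((a1 * (((b1 * e1) + h1) - (b1 * h1))) / (((a1 * (((b1 * e1) + h1) - (b1 * h1))) + (((c1 * f1) + h1) - (c1 * h1))) - (a1 * (((c1 * f1)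 + h1) - (c1 * h1))))) * ((b1 * e1) / (((b1 * e1) + h1) - (b1 * h1)))) + ((c1 * f1) / (((c1 * f1) + h1) - (c1 * h1)))) - (((a1 * (((b1 * e1) + h1) - (b1 * h1))) / (((a1 * (((b1 * e1) + h1) - (b1 * h1))) + (((c1 * f1) + h1) - (c1 * h1))) - (a1 * (((c1 * f1) + h1) - (c1 * h1))))) * ((c1 * f1) / (((c1 * f1) + h1) - (c1 * h1))))) ≠ 0) :
    ((((a1 * (((b1 * e1) + h1) - (b1 * h1))) / (((a1 * (((b1 * e1) + h1) - (b1 * h1))) + (((c1 * f1) + h1) - (c1 * h1))) - (a1 * (((c1 * f1) + h1) - (c1 * h1))))) * ((b1 * e1) / (((b1 * e1) + h1) - (b1 * h1)))) / (((((a1 * (((b1 * e1) + h1) - (b1 * h1))) / (((a1 * (((b1 * e1) + h1) - (b1 * h1))) + (((c1 * f1) + h1) - (c1 * h1))) - (a1 * (((c1 * f1) + h1) - (c1 * h1))))) * ((b1 * e1) / (((b1 * e1) + h1) - (b1 * h1)))) + ((c1 * f1) / (((c1 * f1) + h1) - (c1 * h1)))) - (((a1 * (((b1 * e1) + h1) -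 (b1 * h1))) / (((a1 * (((b1 * e1) + h1) - (b1 * h1))) + (((c1 * f1) + h1) - (c1 * h1))) - (a1 * (((c1 * f1) + h1) - (c1 * h1))))) * ((c1 * f1) / (((c1 * f1) + h1) - (c1 * h1)))))) = ((((a1 * b1) / (((a1 * b1) + c1) - (a1 * c1))) * e1) / (((((a1 * b1) / (((a1 * b1) + c1) - (a1 * c1))) * e1) + f1) - (((a1 * b1) / (((a1 * b1) + c1) - (a1 * c1))) * f1))) := by
  rw [div_eq_div_iff nz5 nz4]
  generalize hK : (((a1 * b1) + c1) - (a1 * c1)) = K at *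
  generalize hB : (((b1 * e1) + h1) - (b1 * h1)) = B at *
  generalize hC : (((c1 * f1) + h1) - (c1 * h1)) = C at *
  generalize hA : (((a1 * B) + C) - (a1 * C)) = A at *
  field_simp
  subst hA hB hC hK
  ring

set_option maxHeartbeats 4000000 in
lemma aux2 (a2 b2 d1 e2 g1 i1 : ℂ) (nz0 : ((b2 + (d1 * a2)) - a2) ≠ 0) (nz1 : ((e2 + (i1 * b2)) - b2) ≠ 0) (nz2 : (((d1 * g1) + i1) - (d1 * i1)) ≠ 0) (nz3 : ((e2 + ((((d1 * g1) + i1) - (d1 * i1)) * a2)) - a2) ≠ 0) (nz4 : ((e2 + (g1 * (((d1 * a2) * b2) / ((b2 + (d1 * a2)) - a2)))) - (((d1 * a2) * b2) / ((b2 + (d1 * a2)) - a2))) ≠ 0) (nz5 : (((((i1 * b2) * e2) / ((e2 + (i1 * b2)) - b2)) + (((d1 * g1) / (((d1 * g1) + i1) - (d1 * i1))) * ((((((d1 * g1) + i1) - (d1 * i1)) * a2) * e2) / ((e2 + ((((d1 * g1) + i1) - (d1 * i1)) * a2)) - a2)))) - ((((((d1 * g1) + i1) - (d1 * i1)) * a2)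 * e2) / ((e2 + ((((d1 * g1) + i1) - (d1 * i1)) * a2)) - a2))) ≠ 0) :
    (((((d1 * g1) / (((d1 * g1) + i1) - (d1 * i1))) * ((((((d1 * g1) + i1) - (d1 * i1)) * a2) * e2) / ((e2 + ((((d1 * g1) + i1) - (d1 * i1)) * a2)) - a2))) * (((i1 * b2) * e2) / ((e2 + (i1 * b2)) - b2))) / (((((i1 * b2) * e2) / ((e2 + (i1 * b2)) - b2)) + (((d1 * g1) / (((d1 * g1) + i1) - (d1 * i1))) * ((((((d1 * g1) + i1) - (d1 * i1)) * a2) * e2) / ((e2 + ((((d1 * g1) + i1) - (d1 * i1)) * a2)) - a2)))) - ((((((d1 * g1) + i1) - (d1 * i1)) * a2) * e2) / ((e2 + ((((d1 * g1) + i1) - (d1 * i1)) * a2)) - a2)))) = (((g1 * (((d1 * a2) * b2) / ((b2 + (d1 * a2)) - a2))) * e2) / ((e2 + (g1 * (((d1 * a2) * b2) / ((b2 + (d1 * a2)) - a2)))) - (((d1 * a2) * b2) / ((b2 + (d1 * a2)) - a2)))) := by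
  rw [div_eq_div_iff nz5 nz4]
  field_simp
  ring

set_option maxHeartbeats 4000000 in
lemma aux3 (a1 b1 c1 e1 f1 h1 : ℂ) (nz0 : (((a1 * b1) + c1) - (a1 * c1)) ≠ 0) (nz1 : (((b1 * e1) + h1) - (b1 * h1)) ≠ 0) (nz2 : (((c1 * f1) + h1) - (c1 * h1)) ≠ 0) (nz3 : (((a1 * (((b1 * e1) + h1) - (b1 * h1))) + (((c1 * f1) + h1) - (c1 * h1))) - (a1 * (((c1 * f1) + h1) - (c1 * h1)))) ≠ 0) (nz4 : ((((((a1 * b1) + c1) - (a1 * c1)) * (((((a1 * b1) / (((a1 * b1) + c1) - (a1 * c1))) * e1) + f1) - (((a1 * b1) / (((a1 * b1) + c1) - (a1 * c1))) * f1))) + h1) - ((((a1 * b1) + c1) - (a1 * c1)) * h1)) ≠ 0) :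
    (((((a1 * (((b1 * e1) + h1) - (b1 * h1))) / (((a1 * (((b1 * e1) + h1) - (b1 * h1))) + (((c1 * f1) + h1) - (c1 * h1))) - (a1 * (((c1 * f1) + h1) - (c1 * h1))))) * ((b1 * e1) / (((b1 * e1) + h1) - (b1 * h1)))) + ((c1 * f1) / (((c1 * f1) + h1) - (c1 * h1)))) - (((a1 * (((b1 * e1) + h1) - (b1 * h1))) / (((a1 * (((b1 * e1) + h1) - (b1 * h1))) + (((c1 * f1) + h1) - (c1 * h1))) - (a1 * (((c1 * f1) + h1) - (c1 * h1))))) * ((c1 * f1) / (((c1 * f1) + h1) - (c1 * h1))))) = (((((a1 * b1) + c1) - (a1 * c1)) * (((((a1 * b1) / (((a1 * b1) + c1) - (a1 * c1))) * e1) + f1) - (((a1 * b1) / (((a1 * b1) + c1) - (a1 * c1))) * f1))) / ((((((a1 * b1) + c1) - (a1 * c1)) * (((((a1 * b1) / (((a1 * b1) + c1) - (a1 * c1))) * e1) + f1) - (((a1 * b1) / (((a1 * b1) + c1) - (a1 * c1))) * f1))) + h1) - ((((a1 * b1) + c1) - (a1 * c1)) * h1))) := by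
  rw [eq_div_iff nz4]
  generalize hK : (((a1 * b1) + c1) - (a1 * c1)) = K at *
  generalize hB : (((b1 * e1) + h1) - (b1 * h1)) = B at *
  generalize hC : (((c1 * f1) + h1) - (c1 * h1)) = C at *
  generalize hA : (((a1 * B) + C) - (a1 * C)) = A at *
  field_simp
  subst hA hB hC hK
  ring

set_option maxHeartbeats 4000000 in
lemma aux4 (a2 b2 d1 e2 g1 i1 : ℂ) (nz0 : e2 ≠ 0) (nz1 : b2 ≠ 0) (nz2 : ((b2 + (d1 * a2)) - a2) ≠ 0) (nz3 : ((e2 + (i1 * b2)) - b2) ≠ 0) (nz4 : (((d1 * g1) + i1) - (d1 * i1)) ≠ 0) (nz5 : (((i1 * b2) * e2) / ((e2 + (i1 * b2)) - b2)) ≠ 0) (nz6 : ((e2 + ((((d1 * g1) + i1) - (d1 * i1)) * a2)) - a2) ≠ 0) (nz7 : ((((((b2 + (d1 * a2)) - a2) / b2) * (((e2 + (g1 * (((d1 * a2) * b2) / ((b2 + (d1 * a2)) - a2)))) - (((d1 * a2) * b2) / ((b2 + (d1 * a2)) - a2))) / e2)) + (((e2 + (i1 * b2)) - b2) / e2)) -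 ((((b2 + (d1 * a2)) - a2) / b2) * (((e2 + (i1 * b2)) - b2) / e2))) ≠ 0) :
    ((((((i1 * b2) * e2) / ((e2 + (i1 * b2)) - b2)) + (((d1 * g1) / (((d1 * g1) + i1) - (d1 * i1))) * ((((((d1 * g1) + i1) - (d1 * i1)) * a2) * e2) / ((e2 + ((((d1 * g1) + i1) - (d1 * i1)) * a2)) - a2)))) - ((((((d1 * g1) + i1) - (d1 * i1)) * a2) * e2) / ((e2 + ((((d1 * g1) + i1) - (d1 * i1)) * a2)) - a2))) / (((i1 * b2) * e2) / ((e2 + (i1 * b2)) - b2))) = (((((b2 + (d1 * a2)) - a2) / b2) * (((e2 + (g1 * (((d1 * a2) * b2) / ((b2 + (d1 * a2)) - a2)))) - (((d1 * a2) * b2) / ((b2 + (d1 * a2)) - a2))) / e2)) / ((((((b2 + (d1 * a2)) - a2) / b2) * (((e2 + (g1 * (((d1 * a2) * b2) / ((b2 + (d1 * a2)) - a2)))) - (((d1 * a2) * b2) / ((b2 + (d1 * a2)) - a2))) / e2)) + (((e2 + (i1 * b2)) - b2) / e2)) - ((((b2 + (d1 * a2)) - a2) / b2) * (((e2 + (i1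 * b2)) - b2) / e2)))) := by
  rw [div_eq_div_iff nz5 nz7]
  generalize hM : ((b2 + (d1 * a2)) - a2) = M at *
  generalize hP : ((e2 + (i1 * b2)) - b2) = Q at *
  generalize hR : (((d1 * g1) + i1) - (d1 * i1)) = R at *
  generalize hT : ((e2 + (R * a2)) - a2) = T at *
  field_simp
  subst hT hR hP hM
  ring

set_option maxHeartbeats 4000000 in
lemma aux5 (a1 b1 c1 e1 f1 h1 : ℂ) (nz0 : (((a1 * b1) + c1) - (a1 * c1)) ≠ 0) :
    (((a1 * (((b1 * e1) + h1) - (b1 * h1))) + (((c1 * f1) + h1) - (c1 * h1))) - (a1 * (((c1 * f1) + h1) - (c1 * h1)))) = ((((((a1 * b1) + c1) - (a1 * c1)) * (((((a1 * b1) / (((a1 * b1) + c1) - (a1 * c1))) * e1) + f1) - (((a1 * b1) / (((a1 * b1) + c1) - (a1 * c1))) * f1))) + h1) - ((((a1 * b1) + c1) - (a1 * c1)) * h1)) := by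
  field_simp
  try rw [eq_div_iff (by simp only [ne_eq, mul_eq_zero, not_or] at *; tauto)]
  try rw [div_eq_iff (by simp only [ne_eq, mul_eq_zero, not_or] at *; tauto)]
  ring

set_option maxHeartbeats 4000000 in
lemma aux6 (a2 b2 d1 e2 g1 i1 : ℂ) (nz0 : b2 ≠ 0) (nz1 : e2 ≠ 0) (nz2 : ((b2 + (d1 * a2)) - a2) ≠ 0) :
    (((e2 + ((((d1 * g1) + i1) - (d1 * i1)) * a2)) - a2) / e2) = ((((((b2 + (d1 * a2)) - a2) / b2) * (((e2 + (g1 * (((d1 * a2) * b2) / ((b2 + (d1 * a2)) - a2)))) - (((d1 * a2) * b2) / ((b2 + (d1 * a2)) - a2))) / e2)) + (((e2 + (i1 * b2)) - b2) / e2)) - ((((b2 + (d1 * a2)) - a2) / b2) * (((e2 + (i1 * b2)) - b2) / e2))) := by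
  field_simp
  try rw [eq_div_iff (by simp only [ne_eq, mul_eq_zero, not_or] at *; tauto)]
  try rw [div_eq_iff (by simp only [ne_eq, mul_eq_zero, not_or] at *; tauto)]
  ring

set_option maxHeartbeats 1600000

/-- The map S : (ℂ²)⁴ → (ℂ²)⁴,
S(x₁,x₂,y₁,y₂,z₁,z₂,t₁,t₂) = (x₁y₁/(x₁y₁+z₁−x₁z₁), t₁x₂y₂/(y₂+t₁x₂−x₂),
x₁y₁+z₁−x₁z₁, y₂, z₁, t₂, (y₂+t₁x₂−x₂)/y₂, z₂), is a 4-simplex map: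
it satisfies the 4-simplex equation at every point of (ℂ²)¹⁰ at which all
denominators occurring in both composed sides are nonzero. -/

theorem Sc_is_4simplex (p : P C2)
    (hL : lhsDom DomC Sc p) (hR : rhsDom DomC Sc p) :
    lhs Sc p = rhs Sc p := by
  obtain ⟨⟨a1,a2⟩,⟨b1,b2⟩,⟨c1,c2⟩,⟨d1,d2⟩,⟨e1,e2⟩,⟨f1,f2⟩,⟨g1,g2⟩,⟨h1,h2⟩,⟨i1,i2⟩,⟨j1,j2⟩⟩ := p
  simp only [lhsDom, rhsDom, app1234, app1567, app2589, app368X, app479X,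
    proj1234, proj1567, proj2589, proj368X, proj479X, Sc, DomC] at hL hR
  obtain ⟨⟨L1,L2,L3⟩,⟨L4,L5,L6⟩,⟨L7,L8,L9⟩,⟨L10,L11,L12⟩,⟨L13,L14,L15⟩⟩ := hL
  obtain ⟨⟨R1,R2,R3⟩,⟨R4,R5,R6⟩,⟨R7,R8,R9⟩,⟨R10,R11,R12⟩,⟨R13,R14,R15⟩⟩ := hR
  show _ = _
  simp only [lhs, rhs, Function.comp, app1234, app1567, app2589, app368X, app479X, Sc,
    Prod.mk.injEq]
  and_intros <;>
    first
    | trivial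
    | exact aux1 a1 b1 c1 e1 f1 h1 R1 L7 L4 L10 R4 L13
    | exact aux2 a2 b2 d1 e2 g1 i1 R2 L8 L1 L11 R5 L14
    | exact aux3 a1 b1 c1 e1 f1 h1 R1 L7 L4 L10 R7
    | exact aux4 a2 b2 d1 e2 g1 i1 L9 R3 R2 L8 L1 L15 L11 R13
    | exact aux5 a1 b1 c1 e1 f1 h1 R1
    | exact aux6 a2 b2 d1 e2 g1 i1 R3 L9 R2

end Paper4Simplex
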